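/- Let n = 4, m = 4 objects O = {a, b, c, d}, and c = 1, and let f be an anonymous, neutral, SD-efficient assignment rule. At the profile where agents 1 and 2 both report a ≻ b ≻ c ≻ d and agents 3 and 4 both report b ≻ a ≻ c ≻ d, f must return the random assignment in which agents 1 and 2 each receive a with probability 1/2, b with probability 0, and c and d each with probability 1/4, while agents 3 and 4 each receive b with probability 1/2, a with probability 0, and c and d each with probability 1/4. -/

import Mathlib

open Finset
open scoped Classical

/-- A (binary-relation) preference over `m` objects; `R a b` means `a ≿ b`. -/
abbrev Pref (m : ℕ) := Fin m → Fin m → Prop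

/-- A strict (linear) preference: reflexive, transitive, antisymmetric and total
weak relation `≿`, i.e. a linear order on the objects. -/
def IsStrictPref {m : ℕ} (R : Pref m) : Prop :=
  (∀ a, R a a) ∧ (∀ a b c, R a b → R b c → R a c) ∧
  (∀ a b, R a b → R b a → a = b) ∧ (∀ a b, R a b ∨ R b a)

/-- A profile of strict preferences, one for each agent. -/
def ValidProfile {n m : ℕ} (pref : Fin n → Pref m) : Prop :=
  ∀ i, IsStrictPref (pref i)

/-- `x` (first-order) stochastically dominates `y` w.r.t. preference `R`:
for every object `o`, the total mass on objects weakly preferred to `o`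
under `x` is at least that under `y`. -/
def sdPrefers {m : ℕ} (R : Pref m) (x y : Fin m → ℝ) : Prop :=
  ∀ o : Fin m,
    ∑ o' ∈ univ.filter (fun o' => R o' o), x o' ≥
    ∑ o' ∈ univ.filter (fun o' => R o' o), y o'

/-- Strict stochastic dominance. -/
def sdStrict {m : ℕ} (R : Pref m) (x y : Fin m → ℝ) : Prop :=
  sdPrefers R x y ∧ ¬ sdPrefers R y x

/-- Strict downward-lexicographic (DL) preference of `x` over `y`:
at the most preferred object where they differ, `x` gives more. -/
def dlStrict {m : ℕ} (R : Pref m) (x y : Fin m → ℝ) : Prop :=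
  ∃ o : Fin m, x o > y o ∧ ∀ o', x o' ≠ y o' → R o o'

/-- Weak DL preference. -/
def dlPrefers {m : ℕ} (R : Pref m) (x y : Fin m → ℝ) : Prop :=
  x = y ∨ dlStrict R x y

/-- A random assignment: entries in `[0,1]`, every object fully allocated
(column sums `1`), every agent receiving `c` units (row sums `c`). -/
def IsRandomAssignment (n m c : ℕ) (p : Fin n → Fin m → ℝ) : Prop :=
  (∀ i o, 0 ≤ p i o ∧ p i o ≤ 1) ∧
  (∀ o, ∑ i, p i o = 1) ∧
  (∀ i, ∑ o, p i o = (c : ℝ))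

/-- A discrete (0/1) matrix. -/
def IsDiscreteMatrix (n m : ℕ) (p : Fin n → Fin m → ℝ) : Prop :=
  ∀ i o, p i o = 0 ∨ p i o = 1

/-- `p` is SD-efficient at profile `pref`: no random assignment `q` weakly
SD-dominates it for everyone and strictly for someone. -/
def SDEfficientAssignment (n m c : ℕ) (pref : Fin n → Pref m)
    (p : Fin n → Fin m → ℝ) : Prop :=
  ¬ ∃ q : Fin n → Fin m → ℝ, IsRandomAssignment n m c q ∧
      (∀ i, sdPrefers (pref i) (q i) (p i)) ∧
      ∃ j, sdStrict (pref j) (q j) (p j)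

/-- Anonymity of an assignment rule: permuting the agents' reports permutes
their allocations accordingly. -/
def Anonymous (n m : ℕ) (f : (Fin n → Pref m) → Fin n → Fin m → ℝ) : Prop :=
  ∀ (pref : Fin n → Pref m) (σ : Equiv.Perm (Fin n)), ValidProfile pref →
    ∀ i, f (fun j => pref (σ j)) i = f pref (σ i)

/-- Neutrality of an assignment rule: relabelling the objects (in all
preferences) relabels the returned assignment accordingly. -/
def Neutral (n m : ℕ) (f : (Fin n → Pref m) → Fin n → Fin m → ℝ) : Prop :=
  ∀ (pref : Fin n → Pref m) (τ : Equiv.Perm (Fin m)), ValidProfile pref →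
    ∀ i o, f (fun j a b => pref j (τ.symm a) (τ.symm b)) i o = f pref i (τ.symm o)

/-- Weak SD-strategyproofness: no agent can misreport and obtain an allocation
he strictly SD-prefers (w.r.t. his true preference). -/
def WeakSDSP (n m : ℕ) (f : (Fin n → Pref m) → Fin n → Fin m → ℝ) : Prop :=
  ¬ ∃ (pref : Fin n → Pref m) (i : Fin n) (R' : Pref m),
      ValidProfile pref ∧ IsStrictPref R' ∧
      sdStrict (pref i) (f (Function.update pref i R') i) (f pref i)

/-- Weak SD group-strategyproofness: no nonempty coalition can jointly
misreport so that every member strictly SD-prefers the new allocation. -/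
def WeakSDGroupSP (n m : ℕ) (f : (Fin n → Pref m) → Fin n → Fin m → ℝ) : Prop :=
  ¬ ∃ (pref pref' : Fin n → Pref m) (S : Finset (Fin n)),
      ValidProfile pref ∧ S.Nonempty ∧
      (∀ i ∈ S, IsStrictPref (pref' i)) ∧
      (∀ i ∉ S, pref' i = pref i) ∧
      ∀ i ∈ S, sdStrict (pref i) (f pref' i) (f pref i)

/-- DL-strategyproofness: truth-telling always yields a weakly DL-preferred
allocation. -/
def DLSP (n m : ℕ) (f : (Fin n → Pref m) → Fin n → Fin m → ℝ) : Prop :=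
  ∀ (pref : Fin n → Pref m) (i : Fin n) (R' : Pref m),
    ValidProfile pref → IsStrictPref R' →
    dlPrefers (pref i) (f pref i) (f (Function.update pref i R') i)

/-- The set of the `c` most preferred objects under the strict preference `R`:
objects having at most `c` objects weakly preferred to them. -/
noncomputable def topSet (m c : ℕ) (R : Pref m) : Finset (Fin m) :=
  univ.filter (fun o => (univ.filter (fun o' => R o' o)).card ≤ c)

/-- A perfect assignment: every agent receives each of his `c` most preferred
objects with probability `1`. -/
def PerfectAssignment (n m c : ℕ) (pref : Fin n → Pref m) (p : Fin n → Fin m → ℝ) : Prop :=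
  ∀ i, ∀ o ∈ topSet m c (pref i), p i o = 1

/-- Ex post efficiency: `p` is a convex combination of SD-efficient discrete
assignments. -/
def ExPostEfficient (n m c : ℕ) (pref : Fin n → Pref m)
    (p : Fin n → Fin m → ℝ) : Prop :=
  ∃ (k : ℕ) (w : Fin k → ℝ) (d : Fin k → Fin n → Fin m → ℝ),
    (∀ j, 0 ≤ w j) ∧ (∑ j, w j = 1) ∧
    (∀ j, IsDiscreteMatrix n m (d j) ∧ IsRandomAssignment n m c (d j) ∧
          SDEfficientAssignment n m c pref (d j)) ∧
    (∀ i o, p i o = ∑ j, w j * d j i o)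

/-- A (possibly unbalanced) 0/1 allocation matrix: 0/1 entries, every object
assigned to exactly one agent. -/
def ZeroOneAlloc (n m : ℕ) (p : Fin n → Fin m → ℝ) : Prop :=
  (∀ i o, p i o = 0 ∨ p i o = 1) ∧ (∀ o, ∑ i, p i o = 1)

/-- Pareto optimality among 0/1 allocation matrices (w.r.t. SD comparisons). -/
def ParetoOptAlloc (n m : ℕ) (pref : Fin n → Pref m)
    (p : Fin n → Fin m → ℝ) : Prop :=
  ZeroOneAlloc n m p ∧
  ¬ ∃ q : Fin n → Fin m → ℝ, ZeroOneAlloc n m q ∧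
      (∀ i, sdPrefers (pref i) (q i) (p i)) ∧
      ∃ j, sdStrict (pref j) (q j) (p j)

/-- `p` is the outcome of the priority (serial dictator) rule for the agent
ordering `σ`: it is a discrete assignment in which, sequentially, agent
`σ k` receives his `c` most preferred objects among those not taken by the
earlier agents `σ 0, …, σ (k-1)`. -/
def PriorityOutcome (n m c : ℕ) (pref : Fin n → Pref m) (σ : Equiv.Perm (Fin n))
    (p : Fin n → Fin m → ℝ) : Prop :=
  IsDiscreteMatrix n m p ∧ IsRandomAssignment n m c p ∧
  ∀ (k : Fin n) (o : Fin m), (∀ j, j < k → p (σ j) o ≠ 1) →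
    (p (σ k) o = 1 ↔
      (univ.filter (fun o' => (∀ j, j < k → p (σ j) o' ≠ 1) ∧ pref (σ k) o' o)).card ≤ c)

/-- The strict preference induced by a ranking function (smaller rank =
more preferred). -/
def prefOfRank {m : ℕ} (r : Fin m → ℕ) : Pref m := fun a b => r a ≤ r b


/-- Helper: a ranking with injective rank function gives a strict preference. -/
lemma isStrictPref_of_injective {m : ℕ} {r : Fin m → ℕ} (hr : Function.Injective r) :
    IsStrictPref (prefOfRank r) :=
  ⟨fun a => le_refl _, fun _ _ _ h1 h2 => le_trans h1 h2,
   fun _ _ h1 h2 => hr (le_antisymm h1 h2), fun a b => le_total (r a) (r b)⟩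

/-- Case analysis helper keeping `Fin 4` indices as numerals. -/
lemma forall_fin_four {Q : Fin 4 → Prop} (h0 : Q 0) (h1 : Q 1) (h2 : Q 2) (h3 : Q 3) :
    ∀ o, Q o := by
  intro o; fin_cases o; exacts [h0, h1, h2, h3]

/-- The cloned profile of Statement 15. -/
def PP : Fin 4 → Pref 4 :=
  ![prefOfRank ![0, 1, 2, 3], prefOfRank ![0, 1, 2, 3],
    prefOfRank ![1, 0, 2, 3], prefOfRank ![1, 0, 2, 3]]

lemma PP_zero (a b : Fin 4) : PP 0 a b ↔ (![0,1,2,3] : Fin 4 → ℕ) a ≤ ![0,1,2,3] b := Iff.rfl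
lemma PP_one (a b : Fin 4) : PP 1 a b ↔ (![0,1,2,3] : Fin 4 → ℕ) a ≤ ![0,1,2,3] b := Iff.rfl
lemma PP_two (a b : Fin 4) : PP 2 a b ↔ (![1,0,2,3] : Fin 4 → ℕ) a ≤ ![1,0,2,3] b := Iff.rfl
lemma PP_three (a b : Fin 4) : PP 3 a b ↔ (![1,0,2,3] : Fin 4 → ℕ) a ≤ ![1,0,2,3] b := Iff.rfl

lemma PP_valid : ValidProfile PP := by
  intro i
  fin_cases i <;> exact isStrictPref_of_injective (by decide)

/-- The permutation swapping 0 and 1 on `Fin 4`. -/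
def sw01 : Equiv.Perm (Fin 4) := ⟨![1,0,2,3], ![1,0,2,3], by decide, by decide⟩

/-- The permutation swapping 2 and 3 on `Fin 4`. -/
def sw23 : Equiv.Perm (Fin 4) := ⟨![0,1,3,2], ![0,1,3,2], by decide, by decide⟩

/-- The block swap `0↔2, 1↔3` on `Fin 4`. -/
def sB : Equiv.Perm (Fin 4) := ⟨![2,3,0,1], ![2,3,0,1], by decide, by decide⟩

set_option maxHeartbeats 1600000 in
/-- With `n = 4` agents, `m = 4` objects `a,b,c,d` (indices
`0,1,2,3`) and `c = 1`: any anonymous, neutral, SD-efficient assignment rule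
must, at the profile where agents 1 and 2 report `a ≻ b ≻ c ≻ d` and agents 3
and 4 report `b ≻ a ≻ c ≻ d`, return the assignment in which agents 1 and 2
each get `a` with probability `1/2`, `b` with probability `0`, and `c, d` each
with probability `1/4`, while agents 3 and 4 each get `b` with probability
`1/2`, `a` with probability `0`, and `c, d` each with probability `1/4`. -/
theorem rule_value_at_cloned_profile
    (f : (Fin 4 → Pref 4) → Fin 4 → Fin 4 → ℝ)
    (hRA : ∀ pref, ValidProfile pref → IsRandomAssignment 4 4 1 (f pref))
    (hAnon : Anonymous 4 4 f) (hNeut : Neutral 4 4 f)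
    (hEff : ∀ pref, ValidProfile pref → SDEfficientAssignment 4 4 1 pref (f pref)) :
    f ![prefOfRank ![0, 1, 2, 3], prefOfRank ![0, 1, 2, 3],
        prefOfRank ![1, 0, 2, 3], prefOfRank ![1, 0, 2, 3]] =
      ![![1/2, 0, 1/4, 1/4], ![1/2, 0, 1/4, 1/4],
        ![0, 1/2, 1/4, 1/4], ![0, 1/2, 1/4, 1/4]] := by
  classical
  show f PP = ![![1/2, 0, 1/4, 1/4], ![1/2, 0, 1/4, 1/4],
      ![0, 1/2, 1/4, 1/4], ![0, 1/2, 1/4, 1/4]]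
  have hP : ValidProfile PP := PP_valid
  have h01 : f PP 0 = f PP 1 := by
    have hprof : (fun j => PP (sw01 j)) = PP := by
      funext j; fin_cases j <;> rfl
    have := hAnon PP sw01 hP 0
    rw [hprof] at this
    exact this
  have h23 : f PP 2 = f PP 3 := by
    have hprof : (fun j => PP (sw23 j)) = PP := by
      funext j; fin_cases j <;> rfl
    have := hAnon PP sw23 hP 2
    rw [hprof] at this
    exact this
  have hQ : (fun j a b => PP j (sw01.symm a) (sw01.symm b)) = fun j => PP (sB j) := by
    funext j a b
    have hx : ∀ x : Fin 4, (![0,1,2,3] : Fin 4 → ℕ) (sw01.symm x) = ![1,0,2,3] x := by decide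
    have hy : ∀ x : Fin 4, (![1,0,2,3] : Fin 4 → ℕ) (sw01.symm x) = ![0,1,2,3] x := by decide
    fin_cases j
    · show ((![0,1,2,3] : Fin 4 → ℕ) (sw01.symm a) ≤ (![0,1,2,3] : Fin 4 → ℕ) (sw01.symm b)) =
        ((![1,0,2,3] : Fin 4 → ℕ) a ≤ (![1,0,2,3] : Fin 4 → ℕ) b)
      rw [hx a, hx b]
    · show ((![0,1,2,3] : Fin 4 → ℕ) (sw01.symm a) ≤ (![0,1,2,3] : Fin 4 → ℕ) (sw01.symm b)) =
        ((![1,0,2,3] : Fin 4 → ℕ) a ≤ (![1,0,2,3] : Fin 4 → ℕ) b)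
      rw [hx a, hx b]
    · show ((![1,0,2,3] : Fin 4 → ℕ) (sw01.symm a) ≤ (![1,0,2,3] : Fin 4 → ℕ) (sw01.symm b)) =
        ((![0,1,2,3] : Fin 4 → ℕ) a ≤ (![0,1,2,3] : Fin 4 → ℕ) b)
      rw [hy a, hy b]
    · show ((![1,0,2,3] : Fin 4 → ℕ) (sw01.symm a) ≤ (![1,0,2,3] : Fin 4 → ℕ) (sw01.symm b)) =
        ((![0,1,2,3] : Fin 4 → ℕ) a ≤ (![0,1,2,3] : Fin 4 → ℕ) b)
      rw [hy a, hy b]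
  have hBlock : ∀ i o, f PP (sB i) o = f PP i (sw01.symm o) := by
    intro i o
    have h1 := hNeut PP sw01 hP i o
    rw [hQ] at h1
    have h2 := hAnon PP sB hP i
    rw [← h2]
    exact h1
  have s20 : f PP 2 0 = f PP 0 1 := hBlock 0 0
  have s21 : f PP 2 1 = f PP 0 0 := hBlock 0 1
  have s22 : f PP 2 2 = f PP 0 2 := hBlock 0 2
  have s23 : f PP 2 3 = f PP 0 3 := hBlock 0 3
  obtain ⟨hbd, hcol, hrow⟩ := hRA PP hP
  have hcol' : ∀ o : Fin 4, f PP 0 o + f PP 1 o + f PP 2 o + f PP 3 o = 1 := by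
    intro o; have := hcol o; rwa [Fin.sum_univ_four] at this
  have e1 : ∀ o, f PP 1 o = f PP 0 o := fun o => by rw [← h01]
  have e3 : ∀ o, f PP 3 o = f PP 2 o := fun o => by rw [← h23]
  have hc2 : f PP 0 2 = 1/4 := by
    have := hcol' 2; rw [e1, e3, s22] at this; linarith
  have hc3 : f PP 0 3 = 1/4 := by
    have := hcol' 3; rw [e1, e3, s23] at this; linarith
  have hab : f PP 0 0 + f PP 0 1 = 1/2 := by
    have := hcol' 0; rw [e1, e3, s20] at this; linarith
  have hb1 : 0 ≤ f PP 0 1 := (hbd 0 1).1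
  have hkey : f PP 0 1 = 0 := by
    by_contra hne
    have hpos : 0 < f PP 0 1 := lt_of_le_of_ne hb1 (Ne.symm hne)
    apply hEff PP hP
    refine ⟨![![1/2, 0, 1/4, 1/4], ![1/2, 0, 1/4, 1/4],
        ![0, 1/2, 1/4, 1/4], ![0, 1/2, 1/4, 1/4]], ⟨?_, ?_, ?_⟩, ?_, 0, ?_, ?_⟩
    · refine forall_fin_four ?_ ?_ ?_ ?_ <;>
        refine forall_fin_four ?_ ?_ ?_ ?_ <;>
          constructor <;>
            norm_num [Matrix.cons_val_zero, Matrix.cons_val_one, Matrix.head_cons,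
              Matrix.cons_val_two, Matrix.cons_val_three, Matrix.tail_cons,
              Matrix.vecHead, Matrix.vecTail, Function.comp]
    · refine forall_fin_four ?_ ?_ ?_ ?_ <;>
        · rw [Fin.sum_univ_four]
          norm_num [Matrix.cons_val_zero, Matrix.cons_val_one, Matrix.head_cons,
            Matrix.cons_val_two, Matrix.cons_val_three, Matrix.tail_cons,
            Matrix.vecHead, Matrix.vecTail, Function.comp]
    · refine forall_fin_four ?_ ?_ ?_ ?_ <;>
        · rw [Fin.sum_univ_four]
          norm_num [Matrix.cons_val_zero, Matrix.cons_val_one, Matrix.head_cons,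
            Matrix.cons_val_two, Matrix.cons_val_three, Matrix.tail_cons,
            Matrix.vecHead, Matrix.vecTail, Function.comp]
    · refine forall_fin_four ?_ ?_ ?_ ?_ <;>
        refine forall_fin_four ?_ ?_ ?_ ?_ <;>
          simp [PP_zero, PP_one, PP_two, PP_three, Finset.sum_filter, Fin.sum_univ_four,
            Matrix.cons_val_zero, Matrix.cons_val_one, Matrix.head_cons,
            Matrix.cons_val_two, Matrix.cons_val_three, Matrix.tail_cons,
            Matrix.vecHead, Matrix.vecTail, Function.comp] <;>
          linarith [hab, hb1, hc2, hc3, e1 0, e1 1, e1 2, e1 3,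
            e3 0, e3 1, e3 2, e3 3, s20, s21, s22, s23]
    · refine forall_fin_four ?_ ?_ ?_ ?_ <;>
        simp [PP_zero, PP_one, PP_two, PP_three, Finset.sum_filter, Fin.sum_univ_four,
          Matrix.cons_val_zero, Matrix.cons_val_one, Matrix.head_cons,
          Matrix.cons_val_two, Matrix.cons_val_three, Matrix.tail_cons,
          Matrix.vecHead, Matrix.vecTail, Function.comp] <;>
        linarith [hab, hb1, hc2, hc3]
    · intro hrev
      have := hrev 0
      simp [PP_zero, PP_one, PP_two, PP_three, Finset.sum_filter, Fin.sum_univ_four,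
        Matrix.cons_val_zero, Matrix.cons_val_one, Matrix.head_cons,
        Matrix.cons_val_two, Matrix.cons_val_three, Matrix.tail_cons,
        Matrix.vecHead, Matrix.vecTail, Function.comp] at this
      linarith [hab, hpos]
  have ha0 : f PP 0 0 = 1/2 := by linarith
  apply funext
  refine forall_fin_four ?_ ?_ ?_ ?_ <;>
    · apply funext
      refine forall_fin_four ?_ ?_ ?_ ?_ <;>
        simp [Matrix.cons_val_zero, Matrix.cons_val_one, Matrix.head_cons,
            Matrix.cons_val_two, Matrix.cons_val_three, Matrix.tail_cons,
            Matrix.cons_val_succ, Matrix.vecHead, Matrix.vecTail, Function.comp] <;>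
        linarith [ha0, hkey, hc2, hc3, e1 0, e1 1, e1 2, e1 3,
            e3 0, e3 1, e3 2, e3 3, s20, s21, s22, s23]
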